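/- Let n ≥ 1, λ ∈ {1, 2}, d_σ > 0, σ_0 > 0. Let (ξ_t)_{t∈ℕ} be i.i.d. ℝⁿ-valued random vectors, each distributed as the vector (N_{1:λ}, N_2, …, N_n) with independent coordinates, first coordinate distributed as the minimum of λ i.i.d. standard normals and the other n−1 coordinates standard normal. Define W_t = (1/(2 d_σ)) (‖ξ_t‖²/n − 1), so that ln σ_{t+1} = ln σ_t + W_t. Then the (W_t) are i.i.d. with E(W_t) = 0 for every t, i.e. ln σ_t performs an additive unbiased random walk. -/

import Mathlib

open MeasureTheory ProbabilityTheory Filter Real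

/-- Law of the minimum (first order statistic) of `lam` i.i.d. standard normal
random variables. -/
noncomputable def minLaw (lam : ℕ) : Measure ℝ :=
  (Measure.pi fun _ : Fin lam => gaussianReal 0 1).map fun x => ⨅ i, x i

instance (lam : ℕ) : IsProbabilityMeasure (minLaw lam) := by
  unfold minLaw
  exact Measure.isProbabilityMeasure_map
    ((Measurable.iInf fun i => measurable_pi_apply i).aemeasurable)

/-- Law of the selected step `(N_{1:λ}, N_2, …, N_n)`: independent coordinates, the
first coordinate distributed as the minimum of `lam` i.i.d. standard normals and the
other `n - 1` coordinates standard normal. -/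
noncomputable def xiLaw (n lam : ℕ) : Measure (Fin n → ℝ) :=
  Measure.pi fun i => if (i : ℕ) = 0 then minLaw lam else gaussianReal 0 1

open Set
open scoped ENNReal NNReal

lemma integrable_sq_exp : Integrable (fun x : ℝ => x ^ 2 * Real.exp (-(1/2) * x ^ 2)) := by
  have h := integrable_rpow_mul_exp_neg_mul_sq (b := (1/2 : ℝ)) (by norm_num) (s := 2) (by norm_num)
  have : ∀ x : ℝ, x ^ (2:ℝ) = x ^ 2 := fun x => by
    rw [show (2:ℝ) = ((2:ℕ):ℝ) by norm_num, Real.rpow_natCast]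
  simpa [this] using h

lemma integral_sq_exp_Ioi :
    ∫ x in Ioi (0:ℝ), x ^ 2 * Real.exp (-(1/2) * x ^ 2) = Real.sqrt (2 * π) / 2 := by
  have h := integral_rpow_mul_exp_neg_mul_rpow (p := (2:ℝ)) (q := (2:ℝ)) (b := (1/2:ℝ))
    (by norm_num) (by norm_num) (by norm_num)
  have he : ∀ x : ℝ, x ^ (2:ℝ) = x ^ 2 := fun x => by
    rw [show (2:ℝ) = ((2:ℕ):ℝ) by norm_num, Real.rpow_natCast]
  simp only [he] at h
  rw [h]
  have hg : Real.Gamma ((2 + 1) / 2) = Real.sqrt π / 2 := by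
    rw [show ((2:ℝ)+1)/2 = 1/2 + 1 by norm_num, Real.Gamma_add_one (by norm_num),
      Real.Gamma_one_half_eq]
    ring
  rw [hg]
  have h2 : (1/2 : ℝ) ^ (-(2+1)/2 : ℝ) = 2 ^ ((3:ℝ)/2) := by
    rw [one_div, show (-(2+1)/2 : ℝ) = -(3/2) by norm_num, Real.inv_rpow (by norm_num),
      ← Real.rpow_neg (by norm_num), neg_neg]
  rw [h2]
  have h3 : (2:ℝ) ^ ((3:ℝ)/2) = 2 * Real.sqrt 2 := by
    rw [show ((3:ℝ)/2) = 1 + 1/2 by norm_num, Real.rpow_add (by norm_num), Real.rpow_one,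
      ← Real.sqrt_eq_rpow]
  rw [h3, Real.sqrt_mul (by norm_num)]
  ring

lemma integral_sq_exp :
    ∫ x : ℝ, x ^ 2 * Real.exp (-(1/2) * x ^ 2) = Real.sqrt (2 * π) := by
  set f : ℝ → ℝ := fun x => x ^ 2 * Real.exp (-(1/2) * x ^ 2) with hf
  have hsplit : (∫ x in Iic (0:ℝ), f x) + ∫ x in Ioi (0:ℝ), f x = ∫ x, f x :=
    intervalIntegral.integral_Iic_add_Ioi integrable_sq_exp.integrableOn
      integrable_sq_exp.integrableOn
  have hiio : ∫ x in Iic (0:ℝ), f x = ∫ x in Ioi (0:ℝ), f x := by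
    have h := integral_comp_neg_Ioi (c := (0:ℝ)) f
    rw [neg_zero] at h
    rw [← h]
    refine integral_congr_ae (Filter.Eventually.of_forall fun x => ?_)
    simp [hf, neg_pow]
  rw [← hsplit, hiio, integral_sq_exp_Ioi]
  ring

lemma gaussianPDFReal_zero_one (x : ℝ) :
    gaussianPDFReal 0 1 x = (Real.sqrt (2 * π))⁻¹ * Real.exp (-(1/2) * x ^ 2) := by
  simp only [gaussianPDFReal, NNReal.coe_one, mul_one, sub_zero]
  ring_nf

lemma gaussianReal_eq : gaussianReal 0 1 =
    volume.withDensity (fun x => ((gaussianPDFReal 0 1 x).toNNReal : ℝ≥0∞)) := by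
  rw [gaussianReal_of_var_ne_zero 0 one_ne_zero]
  rfl

lemma meas_pdf : Measurable (fun x => (gaussianPDFReal 0 1 x).toNNReal) :=
  (measurable_gaussianPDFReal 0 1).real_toNNReal

lemma integrable_sq_gaussian : Integrable (fun x : ℝ => x ^ 2) (gaussianReal 0 1) := by
  rw [gaussianReal_eq, integrable_withDensity_iff_integrable_smul meas_pdf]
  have : ∀ x : ℝ, (gaussianPDFReal 0 1 x).toNNReal • x ^ 2
      = (Real.sqrt (2 * π))⁻¹ * (x ^ 2 * Real.exp (-(1/2) * x ^ 2)) := by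
    intro x
    rw [NNReal.smul_def, Real.coe_toNNReal _ (gaussianPDFReal_nonneg 0 1 x),
      gaussianPDFReal_zero_one, smul_eq_mul]
    ring
  simp only [this]
  exact integrable_sq_exp.const_mul _

lemma integral_sq_gaussian : ∫ x, x ^ 2 ∂(gaussianReal 0 1) = 1 := by
  rw [gaussianReal_eq, integral_withDensity_eq_integral_smul meas_pdf]
  have : ∀ x : ℝ, (gaussianPDFReal 0 1 x).toNNReal • x ^ 2
      = (Real.sqrt (2 * π))⁻¹ * (x ^ 2 * Real.exp (-(1/2) * x ^ 2)) := by
    intro x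
    rw [NNReal.smul_def, Real.coe_toNNReal _ (gaussianPDFReal_nonneg 0 1 x),
      gaussianPDFReal_zero_one, smul_eq_mul]
    ring
  simp only [this]
  rw [integral_const_mul, integral_sq_exp, inv_mul_cancel₀]
  positivity

lemma map_eval_pi' {k : ℕ} (μ : Fin k → Measure ℝ) [∀ i, IsProbabilityMeasure (μ i)]
    (i : Fin k) : (Measure.pi μ).map (fun x => x i) = μ i := by
  ext s hs
  rw [Measure.map_apply (measurable_pi_apply i) hs, show (fun x : Fin k → ℝ => x i) ⁻¹' s
    = Set.pi Set.univ (Function.update (fun _ => Set.univ) i s) from Set.eval_preimage,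
    Measure.pi_pi, Finset.prod_eq_single i]
  · rw [Function.update_self]
  · intro j _ hj
    rw [Function.update_of_ne hj]
    simp
  · simp

lemma iInf_fin_two (x : Fin 2 → ℝ) : (⨅ i, x i) = min (x 0) (x 1) := by
  apply le_antisymm
  · exact le_min (ciInf_le (Set.finite_range x).bddBelow 0)
      (ciInf_le (Set.finite_range x).bddBelow 1)
  · refine le_ciInf fun i => ?_
    fin_cases i
    · exact min_le_left _ _
    · exact min_le_right _ _

lemma minLaw_one : minLaw 1 = gaussianReal 0 1 := by
  have h : (fun x : Fin 1 → ℝ => ⨅ i, x i) = fun x => x 0 := by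
    funext x; exact ciInf_unique
  rw [minLaw, h, map_eval_pi']


noncomputable abbrev mu2 : Measure (Fin 2 → ℝ) := Measure.pi fun _ : Fin 2 => gaussianReal 0 1

lemma measurable_min2 : Measurable (fun x : Fin 2 → ℝ => min (x 0) (x 1)) :=
  (measurable_pi_apply (0 : Fin 2)).min (measurable_pi_apply 1)

lemma measurable_max2 : Measurable (fun x : Fin 2 → ℝ => max (x 0) (x 1)) :=
  (measurable_pi_apply (0 : Fin 2)).max (measurable_pi_apply 1)

lemma integrable_coord_sq (i : Fin 2) : Integrable (fun x : Fin 2 → ℝ => x i ^ 2) mu2 := by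
  have h : Integrable (fun y : ℝ => y ^ 2) ((mu2).map (fun x => x i)) := by
    rw [map_eval_pi']; exact integrable_sq_gaussian
  exact (integrable_map_measure ((continuous_pow 2).measurable).aestronglyMeasurable
    (measurable_pi_apply i).aemeasurable).mp h

lemma integral_coord_sq (i : Fin 2) : ∫ x, x i ^ 2 ∂mu2 = 1 := by
  have h := integral_map (μ := mu2) (φ := fun x => x i) (f := fun y : ℝ => y ^ 2)
    (measurable_pi_apply i).aemeasurable ((continuous_pow 2).measurable).aestronglyMeasurable
  rw [map_eval_pi'] at h
  rw [← h, integral_sq_gaussian]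

lemma integrable_min_sq : Integrable (fun x : Fin 2 → ℝ => (min (x 0) (x 1)) ^ 2) mu2 := by
  refine ((integrable_coord_sq 0).add (integrable_coord_sq 1)).mono'
    (measurable_min2.pow_const 2).aestronglyMeasurable ?_
  refine Filter.Eventually.of_forall fun x => ?_
  rw [Real.norm_eq_abs, abs_of_nonneg (sq_nonneg _), Pi.add_apply]
  rcases le_total (x 0) (x 1) with h | h
  · rw [min_eq_left h]; nlinarith [sq_nonneg (x 1)]
  · rw [min_eq_right h]; nlinarith [sq_nonneg (x 0)]

lemma integrable_max_sq : Integrable (fun x : Fin 2 → ℝ => (max (x 0) (x 1)) ^ 2) mu2 := by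
  refine ((integrable_coord_sq 0).add (integrable_coord_sq 1)).mono'
    (measurable_max2.pow_const 2).aestronglyMeasurable ?_
  refine Filter.Eventually.of_forall fun x => ?_
  rw [Real.norm_eq_abs, abs_of_nonneg (sq_nonneg _), Pi.add_apply]
  rcases le_total (x 0) (x 1) with h | h
  · rw [max_eq_right h]; nlinarith [sq_nonneg (x 0)]
  · rw [max_eq_left h]; nlinarith [sq_nonneg (x 1)]

lemma neg_measurePreserving :
    MeasurePreserving (fun y : ℝ => -y) (gaussianReal 0 1) (gaussianReal 0 1) := by
  refine ⟨measurable_neg, ?_⟩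
  have h : (fun y : ℝ => -y) = fun y => (-1 : ℝ) * y := by funext y; ring
  rw [h, gaussianReal_map_const_mul]
  norm_num

lemma integral_max_sq_eq : ∫ x, (max (x 0) (x 1)) ^ 2 ∂mu2 = ∫ x, (min (x 0) (x 1)) ^ 2 ∂mu2 := by
  have hmp : MeasurePreserving (fun x : Fin 2 → ℝ => fun i => -(x i)) mu2 mu2 :=
    measurePreserving_pi _ _ (fun _ => neg_measurePreserving)
  have h := integral_map (μ := mu2) (φ := fun x : Fin 2 → ℝ => fun i => -(x i))
    (f := fun x : Fin 2 → ℝ => (max (x 0) (x 1)) ^ 2)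
    hmp.measurable.aemeasurable (measurable_max2.pow_const 2).aestronglyMeasurable
  rw [hmp.map_eq] at h
  refine h.trans (integral_congr_ae (Filter.Eventually.of_forall fun x => ?_))
  show (max (-(x 0)) (-(x 1))) ^ 2 = _
  rw [max_neg_neg, neg_pow]
  ring

lemma integral_min_sq : ∫ x, (min (x 0) (x 1)) ^ 2 ∂mu2 = 1 := by
  have hkey : ∀ x : Fin 2 → ℝ, (min (x 0) (x 1)) ^ 2 + (max (x 0) (x 1)) ^ 2
      = x 0 ^ 2 + x 1 ^ 2 := by
    intro x
    rcases le_total (x 0) (x 1) with h | h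
    · rw [min_eq_left h, max_eq_right h]
    · rw [min_eq_right h, max_eq_left h]; ring
  have h1 : ∫ x, ((min (x 0) (x 1)) ^ 2 + (max (x 0) (x 1)) ^ 2) ∂mu2 = 2 := by
    simp only [hkey]
    rw [integral_add (integrable_coord_sq 0) (integrable_coord_sq 1),
      integral_coord_sq, integral_coord_sq]
    norm_num
  rw [integral_add integrable_min_sq integrable_max_sq, integral_max_sq_eq] at h1
  linarith

lemma minLaw_two_map : minLaw 2 = mu2.map (fun x => min (x 0) (x 1)) := by
  have h : (fun x : Fin 2 → ℝ => ⨅ i, x i) = fun x => min (x 0) (x 1) := funext iInf_fin_two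
  rw [minLaw, h]

lemma integrable_sq_minLaw_two : Integrable (fun y : ℝ => y ^ 2) (minLaw 2) := by
  rw [minLaw_two_map]
  exact (integrable_map_measure ((continuous_pow 2).measurable).aestronglyMeasurable
    measurable_min2.aemeasurable).mpr integrable_min_sq

lemma integral_sq_minLaw_two : ∫ y, y ^ 2 ∂(minLaw 2) = 1 := by
  rw [minLaw_two_map, integral_map measurable_min2.aemeasurable
    ((continuous_pow 2).measurable).aestronglyMeasurable]
  exact integral_min_sq

lemma integrable_sq_minLaw {lam : ℕ} (hlam : lam = 1 ∨ lam = 2) :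
    Integrable (fun y : ℝ => y ^ 2) (minLaw lam) := by
  rcases hlam with h | h <;> subst h
  · rw [minLaw_one]; exact integrable_sq_gaussian
  · exact integrable_sq_minLaw_two

lemma integral_sq_minLaw {lam : ℕ} (hlam : lam = 1 ∨ lam = 2) :
    ∫ y, y ^ 2 ∂(minLaw lam) = 1 := by
  rcases hlam with h | h <;> subst h
  · rw [minLaw_one]; exact integral_sq_gaussian
  · exact integral_sq_minLaw_two

section marg
variable {n lam : ℕ}

instance instProbMarg (i : Fin n) :
    IsProbabilityMeasure (if (i : ℕ) = 0 then minLaw lam else gaussianReal 0 1) := by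
  split <;> infer_instance

instance : IsProbabilityMeasure (xiLaw n lam) := by
  unfold xiLaw; infer_instance

lemma xiLaw_map_eval (i : Fin n) :
    (xiLaw n lam).map (fun x => x i)
      = (if (i : ℕ) = 0 then minLaw lam else gaussianReal 0 1) :=
  map_eval_pi' _ i

lemma integrable_coord (hlam : lam = 1 ∨ lam = 2) (i : Fin n) :
    Integrable (fun x : Fin n → ℝ => x i ^ 2) (xiLaw n lam) := by
  have h : Integrable (fun y : ℝ => y ^ 2) ((xiLaw n lam).map (fun x => x i)) := by
    rw [xiLaw_map_eval]
    split
    · exact integrable_sq_minLaw hlam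
    · exact integrable_sq_gaussian
  exact (integrable_map_measure ((continuous_pow 2).measurable).aestronglyMeasurable
    (measurable_pi_apply i).aemeasurable).mp h

lemma integral_coord (hlam : lam = 1 ∨ lam = 2) (i : Fin n) :
    ∫ x, x i ^ 2 ∂(xiLaw n lam) = 1 := by
  have h := integral_map (μ := xiLaw n lam) (φ := fun x => x i) (f := fun y : ℝ => y ^ 2)
    (measurable_pi_apply i).aemeasurable ((continuous_pow 2).measurable).aestronglyMeasurable
  rw [xiLaw_map_eval] at h
  rw [← h]
  split
  · exact integral_sq_minLaw hlam
  · exact integral_sq_gaussian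

end marg

/-- For `λ ∈ {1, 2}`, without cumulation, `ln σ_t` performs an
additive unbiased random walk: the increments `W_t = (1/(2 d_σ))(‖ξ_t‖²/n − 1)`
(so that `ln σ_{t+1} = ln σ_t + W_t`) are i.i.d. with `E(W_t) = 0`. -/
theorem stmt_8 {n lam : ℕ} (hn : 1 ≤ n) (hlam : lam = 1 ∨ lam = 2)
    {Ω : Type*} [MeasureSpace Ω] [IsProbabilityMeasure (ℙ : Measure Ω)]
    (d σ0 : ℝ) (hd : 0 < d) (hσ0 : 0 < σ0)
    (ξ : ℕ → Ω → (Fin n → ℝ)) (hξmeas : ∀ t, Measurable (ξ t))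
    (hξindep : iIndepFun ξ ℙ)
    (hξlaw : ∀ t, Measure.map (ξ t) ℙ = xiLaw n lam)
    (W : ℕ → Ω → ℝ)
    (hW : ∀ t ω, W t ω = (1 / (2 * d)) * ((∑ i, (ξ t ω i) ^ 2) / n - 1))
    (σ : ℕ → Ω → ℝ) (h0 : ∀ ω, σ 0 ω = σ0)
    (hrec : ∀ t ω, Real.log (σ (t + 1) ω) = Real.log (σ t ω) + W t ω) :
    iIndepFun W ℙ ∧
    (∀ s t : ℕ, IdentDistrib (W s) (W t) ℙ ℙ) ∧
    (∀ t : ℕ, (∫ ω, W t ω ∂ℙ) = 0) := by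
  set f : (Fin n → ℝ) → ℝ := fun x => (1 / (2 * d)) * ((∑ i, x i ^ 2) / n - 1) with hfdef
  have hfmeas : Measurable f := by
    apply Measurable.const_mul
    apply Measurable.sub _ measurable_const
    apply Measurable.div_const
    exact Finset.measurable_sum _ fun i _ => (measurable_pi_apply i).pow_const 2
  have hWeq : W = fun t => f ∘ ξ t := by
    funext t ω
    exact hW t ω
  refine ⟨?_, ?_, ?_⟩
  · rw [hWeq]
    exact hξindep.comp _ fun _ => hfmeas
  · intro s t
    rw [hWeq]
    exact (IdentDistrib.comp ⟨(hξmeas s).aemeasurable, (hξmeas t).aemeasurable,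
      by rw [hξlaw s, hξlaw t]⟩ hfmeas)
  · intro t
    have h1 : ∫ ω, W t ω ∂ℙ = ∫ x, f x ∂(Measure.map (ξ t) ℙ) := by
      rw [integral_map (hξmeas t).aemeasurable hfmeas.aestronglyMeasurable, hWeq]
      rfl
    rw [h1, hξlaw t, hfdef]
    have hint := integrable_coord (n := n) hlam
    have hsum : Integrable (fun x : Fin n → ℝ => ∑ i, x i ^ 2) (xiLaw n lam) :=
      integrable_finset_sum _ fun i _ => hint i
    rw [integral_const_mul, integral_sub (hsum.div_const _) (integrable_const 1),
      MeasureTheory.integral_div, integral_finset_sum _ fun i _ => hint i]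
    simp only [integral_coord hlam, Finset.sum_const, Finset.card_univ, Fintype.card_fin,
      nsmul_eq_mul, mul_one, integral_const, measure_univ, probReal_univ, ENNReal.toReal_one, smul_eq_mul,
      one_mul]
    have hn0 : (n : ℝ) ≠ 0 := Nat.cast_ne_zero.mpr (by omega)
    field_simp
    ring
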